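/- Let K be a field of characteristic zero, let q ∈ K[X] be nonzero with deg(q) ≤ d, and let M ∈ M_n(K(X)) be such that qM has polynomial entries of degree at most d. Let 1 ≤ k ≤ n and let P ∈ M_n(K(X)) be an invertible matrix whose first k rows are e_1, δ(e_1), ..., δ^{k−1}(e_1) and whose remaining n−k rows each belong to the set {e_2, ..., e_n} of standard basis rows. Then: (1) q^{k−1}·P has polynomial entries of degree at most (k−1)d; (2) q^{k(k−1)/2}·det(P) is a polynomial of degree at most k(k−1)d/2; (3) q^{k(k+1)/2}·det(P)·P[M], where P[M] = (PM + P′)P⁻¹, has polynomial entries of degree at most k(k+1)d/2. In particular, the degrees occurring in the matrices produced by the first phase of the Danilevski–Barkatou–Zürcher algorithm grow only quadratically in k. -/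

import Mathlib

/-- `δ(u) = u M + u′` for a row vector `u`, the derivation `der` being applied
entrywise. -/
def cvDelta {F : Type*} [Field F] {n : ℕ} (der : F → F)
    (M : Matrix (Fin n) (Fin n) F) (u : Fin n → F) : Fin n → F :=
  Matrix.vecMul u M + fun i => der (u i)

open Polynomial

/-- `q^e f` is a polynomial of degree at most `e·d`. -/
def PB {K : Type*} [Field K] (q : Polynomial K) (d e : ℕ) (f : RatFunc K) : Prop :=
  ∃ p : Polynomial K, p.degree ≤ ((e * d : ℕ) : WithBot ℕ) ∧
    (algebraMap (Polynomial K) (RatFunc K) q) ^ e * f = algebraMap (Polynomial K) (RatFunc K) p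

section Aux

variable {K : Type*} [Field K] {q : Polynomial K} {d : ℕ}

lemma PB_zero (e : ℕ) : PB q d e (0 : RatFunc K) :=
  ⟨0, by simp, by simp⟩

lemma PB_one : PB q d 0 (1 : RatFunc K) :=
  ⟨1, by simp, by simp⟩

lemma PB_add {e : ℕ} {f g : RatFunc K} (hf : PB q d e f) (hg : PB q d e g) :
    PB q d e (f + g) := by
  obtain ⟨p₁, h₁, e₁⟩ := hf
  obtain ⟨p₂, h₂, e₂⟩ := hg
  exact ⟨p₁ + p₂, le_trans (degree_add_le _ _) (max_le h₁ h₂),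
    by rw [mul_add, e₁, e₂, map_add]⟩

lemma PB_neg {e : ℕ} {f : RatFunc K} (hf : PB q d e f) : PB q d e (-f) := by
  obtain ⟨p₁, h₁, e₁⟩ := hf
  exact ⟨-p₁, by simpa using h₁, by rw [mul_neg, e₁, map_neg]⟩

lemma PB_mul {e e' : ℕ} {f g : RatFunc K} (hf : PB q d e f) (hg : PB q d e' g) :
    PB q d (e + e') (f * g) := by
  obtain ⟨p₁, h₁, e₁⟩ := hf
  obtain ⟨p₂, h₂, e₂⟩ := hg
  refine ⟨p₁ * p₂, le_trans (degree_mul_le _ _) ?_, ?_⟩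
  · rw [add_mul]
    push_cast
    exact add_le_add h₁ h₂
  · rw [map_mul, ← e₁, ← e₂, pow_add]; ring

lemma PB_succ (hqd : q.degree ≤ (d : WithBot ℕ)) {e : ℕ} {f : RatFunc K}
    (hf : PB q d e f) : PB q d (e + 1) f := by
  obtain ⟨p₁, h₁, e₁⟩ := hf
  refine ⟨p₁ * q, le_trans (degree_mul_le _ _) ?_, ?_⟩
  · rw [add_mul, one_mul]
    push_cast
    exact add_le_add (by exact_mod_cast h₁) (by exact_mod_cast hqd)
  · rw [map_mul, ← e₁, pow_succ]; ring

lemma PB_le (hqd : q.degree ≤ (d : WithBot ℕ)) {e e' : ℕ} (hee : e ≤ e') {f : RatFunc K}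
    (hf : PB q d e f) : PB q d e' f := by
  induction e', hee using Nat.le_induction with
  | base => exact hf
  | succ m hm ih => exact PB_succ hqd ih

lemma PB_sum {ι : Type*} {s : Finset ι} {e : ℕ} {f : ι → RatFunc K}
    (h : ∀ i ∈ s, PB q d e (f i)) : PB q d e (∑ i ∈ s, f i) := by
  classical
  induction s using Finset.induction_on with
  | empty => simpa using PB_zero e
  | insert _ _ hx ih =>
    rw [Finset.sum_insert hx]
    exact PB_add (h _ (Finset.mem_insert_self _ _))
      (ih fun i hi => h i (Finset.mem_insert_of_mem hi))

lemma PB_prod {ι : Type*} {s : Finset ι} {w : ι → ℕ} {f : ι → RatFunc K}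
    (h : ∀ i ∈ s, PB q d (w i) (f i)) :
    PB q d (∑ i ∈ s, w i) (∏ i ∈ s, f i) := by
  classical
  induction s using Finset.induction_on with
  | empty => simpa using PB_one
  | insert _ _ hx ih =>
    rw [Finset.sum_insert hx, Finset.prod_insert hx]
    exact PB_mul (h _ (Finset.mem_insert_self _ _))
      (ih fun i hi => h i (Finset.mem_insert_of_mem hi))

lemma PB_det {n : ℕ} {w : Fin n → ℕ} {A : Matrix (Fin n) (Fin n) (RatFunc K)}
    (h : ∀ i j, PB q d (w i) (A i j)) :
    PB q d (∑ i, w i) A.det := by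
  rw [Matrix.det_apply]
  refine PB_sum fun σ _ => ?_
  have hp : PB q d (∑ i, w i) (∏ i, A (σ i) i) := by
    have := PB_prod (s := Finset.univ) (w := fun i => w (σ i)) (f := fun i => A (σ i) i)
      (fun i _ => h (σ i) i)
    rwa [Equiv.sum_comp σ w] at this
  rcases Int.units_eq_one_or (Equiv.Perm.sign σ) with h1 | h1 <;> rw [h1]
  · simpa using hp
  · have : ((-1 : ℤˣ) • ∏ i, A (σ i) i) = -(∏ i, A (σ i) i) := by
      rw [Units.smul_def]; simp
    rw [this]
    exact PB_neg hp

end Aux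

section Der

variable {K : Type*} [Field K] (der : RatFunc K → RatFunc K)
  (h_add : ∀ a b : RatFunc K, der (a + b) = der a + der b)
  (h_mul : ∀ a b : RatFunc K, der (a * b) = a * der b + der a * b)
  (h_X : der RatFunc.X = 1)
  (h_C : ∀ c : K, der (RatFunc.C c) = 0)

include h_add h_mul h_X h_C in
lemma der_algebraMap (p : Polynomial K) :
    der (algebraMap (Polynomial K) (RatFunc K) p)
      = algebraMap (Polynomial K) (RatFunc K) (derivative p) := by
  induction p using Polynomial.induction_on with
  | C a => rw [RatFunc.algebraMap_C, h_C, derivative_C, map_zero]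
  | add p r hp hr => rw [map_add, h_add, hp, hr, derivative_add, map_add]
  | monomial m a ih =>
    have hsplit : (C a * X ^ (m + 1) : Polynomial K) = C a * X ^ m * X := by ring
    have hder : derivative (C a * X ^ m * X) = derivative (C a * X ^ m) * X + C a * X ^ m := by
      rw [derivative_mul, derivative_X, mul_one]
    rw [hsplit, map_mul, h_mul, ih, RatFunc.algebraMap_X, h_X, mul_one, hder,
      ]
    simp only [map_add, map_mul, RatFunc.algebraMap_X]
    ring

include h_add h_mul h_X h_C in
lemma PB_der {q : Polynomial K} {d : ℕ} (hqd : q.degree ≤ (d : WithBot ℕ))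
    {e : ℕ} {f : RatFunc K} (hf : PB q d e f) : PB q d (e + 1) (der f) := by
  obtain ⟨p, hdeg, heq⟩ := hf
  set A := algebraMap (Polynomial K) (RatFunc K) with hA
  have hpow : (A q) ^ e = A (q ^ e) := (map_pow A q e).symm
  have heq' : A (q ^ e) * f = A p := by rw [← hpow]; exact heq
  have key : A (q ^ e) * der f + A (derivative (q ^ e)) * f = A (derivative p) := by
    have h1 : der (A (q ^ e) * f) = A (derivative p) := by
      rw [heq']; exact der_algebraMap der h_add h_mul h_X h_C p
    rw [h_mul, der_algebraMap der h_add h_mul h_X h_C] at h1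
    exact h1
  refine ⟨q * derivative p - C ((e : K)) * derivative q * p, ?_, ?_⟩
  · have harith : ((e + 1) * d : ℕ) = d + e * d := by ring
    have hd1 : (q * derivative p).degree ≤ (((e + 1) * d : ℕ) : WithBot ℕ) := by
      apply le_trans (degree_mul_le _ _)
      rw [harith, Nat.cast_add]
      exact add_le_add hqd (le_trans (degree_derivative_le) hdeg)
    have hd2 : (C ((e : K)) * derivative q * p).degree ≤ (((e + 1) * d : ℕ) : WithBot ℕ) := by
      apply le_trans (degree_mul_le _ _)
      rw [harith, Nat.cast_add]
      refine add_le_add ?_ hdeg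
      apply le_trans (degree_mul_le _ _)
      have := add_le_add (degree_C_le (a := (e : K))) (le_trans (degree_derivative_le) hqd)
      simpa using this
    exact le_trans (degree_sub_le _ _) (max_le hd1 hd2)
  · rcases Nat.eq_zero_or_pos e with rfl | he
    · simp only [pow_zero, one_mul] at heq
      rw [heq, der_algebraMap der h_add h_mul h_X h_C, zero_add, pow_one, ← map_mul]
      congr 1
      simp
    · have e1 : e - 1 + 1 = e := by omega
      have hpoly : q * derivative (q ^ e) = C ((e : K)) * derivative q * q ^ e := by
        have hqe : q ^ e = q ^ (e - 1) * q := by rw [← pow_succ, e1]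
        rw [derivative_pow, hqe]; ring
      have l1 : A q ^ (e + 1) * der f = A q * (A (q ^ e) * der f) := by
        rw [← hpow]; ring
      have l2 : A q * (A (derivative (q ^ e)) * f) = A (C ((e : K)) * derivative q * p) := by
        rw [← mul_assoc, ← map_mul, hpoly, map_mul, mul_assoc, heq', ← map_mul]
      rw [l1, eq_sub_of_add_eq key, mul_sub, l2, ← map_mul, ← map_sub]

end Der

/-- Degree bounds for the first phase of the DBZ algorithm: if the first `k`
rows of the invertible matrix `P` are `e₁, δ(e₁), …, δ^{k−1}(e₁)` and the other
rows are standard basis rows among `e₂, …, eₙ`, then `q^{k−1} P` has polynomial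
entries of degree `≤ (k−1)d`, `q^{k(k−1)/2} det P` is a polynomial of degree
`≤ k(k−1)d/2`, and `q^{k(k+1)/2} det(P)·P[M]` has polynomial entries of degree
`≤ k(k+1)d/2`, where `P[M] = (P M + P′) P⁻¹`. -/
theorem dbz_phase_one_degree_bounds {K : Type*} [Field K] [CharZero K] {n k : ℕ}
    (hk1 : 1 ≤ k) (hkn : k ≤ n)
    (der : RatFunc K → RatFunc K)
    (h_add : ∀ a b : RatFunc K, der (a + b) = der a + der b)
    (h_mul : ∀ a b : RatFunc K, der (a * b) = a * der b + der a * b)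
    (h_X : der RatFunc.X = 1)
    (h_C : ∀ c : K, der (RatFunc.C c) = 0)
    (q : Polynomial K) (hq : q ≠ 0) (d : ℕ) (hqd : q.degree ≤ (d : WithBot ℕ))
    (M : Matrix (Fin n) (Fin n) (RatFunc K))
    (hM : ∀ i j : Fin n, ∃ p : Polynomial K, p.degree ≤ (d : WithBot ℕ) ∧
      algebraMap (Polynomial K) (RatFunc K) q * M i j
        = algebraMap (Polynomial K) (RatFunc K) p)
    (P : Matrix (Fin n) (Fin n) (RatFunc K)) (hP : IsUnit P.det)
    (hProws₁ : ∀ i : Fin n, (i : ℕ) < k →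
      P i = (cvDelta der M)^[(i : ℕ)] (Pi.single (⟨0, by omega⟩ : Fin n) 1))
    (hProws₂ : ∀ i : Fin n, k ≤ (i : ℕ) →
      ∃ j : Fin n, 1 ≤ (j : ℕ) ∧ P i = Pi.single j 1) :
    (∀ i j : Fin n, ∃ p : Polynomial K,
      p.degree ≤ (((k - 1) * d : ℕ) : WithBot ℕ) ∧
      (algebraMap (Polynomial K) (RatFunc K) q) ^ (k - 1) * P i j
        = algebraMap (Polynomial K) (RatFunc K) p) ∧
    (∃ p : Polynomial K, p.degree ≤ ((k * (k - 1) / 2 * d : ℕ) : WithBot ℕ) ∧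
      (algebraMap (Polynomial K) (RatFunc K) q) ^ (k * (k - 1) / 2) * P.det
        = algebraMap (Polynomial K) (RatFunc K) p) ∧
    (∀ i j : Fin n, ∃ p : Polynomial K,
      p.degree ≤ ((k * (k + 1) / 2 * d : ℕ) : WithBot ℕ) ∧
      (algebraMap (Polynomial K) (RatFunc K) q) ^ (k * (k + 1) / 2) * P.det *
        ((P * M + P.map der) * P⁻¹) i j
        = algebraMap (Polynomial K) (RatFunc K) p) := by
  classical
  -- entries of `M` satisfy `PB 1`
  have hM1 : ∀ i j, PB q d 1 (M i j) := by
    intro i j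
    obtain ⟨p, h1, h2⟩ := hM i j
    exact ⟨p, by simpa using h1, by simpa using h2⟩
  -- entries of standard basis rows satisfy `PB 0`
  have hsingle : ∀ z j : Fin n, PB q d 0 ((Pi.single z 1 : Fin n → RatFunc K) j) := by
    intro z j
    rcases eq_or_ne j z with rfl | hne
    · rw [Pi.single_eq_same]; exact PB_one
    · rw [Pi.single_eq_of_ne hne]; exact PB_zero 0
  -- applying `δ` raises the `PB` level by 1
  have hdelta : ∀ (e : ℕ) (u : Fin n → RatFunc K), (∀ j, PB q d e (u j)) →
      ∀ j, PB q d (e + 1) (cvDelta der M u j) := by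
    intro e u hu j
    have hrw : cvDelta der M u j = (∑ l, u l * M l j) + der (u j) := by
      simp [cvDelta, Matrix.vecMul, dotProduct]
    rw [hrw]
    exact PB_add (PB_sum fun l _ => PB_mul (hu l) (hM1 l j))
      (PB_der der h_add h_mul h_X h_C hqd (hu j))
  -- iterates of `δ` on `e₁`
  have hiter : ∀ (m : ℕ) (j : Fin n),
      PB q d m (((cvDelta der M)^[m] (Pi.single (⟨0, by omega⟩ : Fin n) 1 : Fin n → RatFunc K)) j) := by
    intro m
    induction m with
    | zero => intro j; simpa using hsingle _ j
    | succ m ih =>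
      intro j
      rw [Function.iterate_succ_apply']
      exact hdelta m _ ih j
  -- weight for each row of `P`
  have hPw : ∀ (i j : Fin n),
      PB q d (if (i : ℕ) < k then (i : ℕ) else 0) (P i j) := by
    intro i j
    by_cases hik : (i : ℕ) < k
    · rw [if_pos hik, hProws₁ i hik]
      exact hiter _ j
    · obtain ⟨l, _, hl⟩ := hProws₂ i (le_of_not_gt hik)
      rw [if_neg hik, hl]
      exact hsingle l j
  -- the total weight is at most `k(k-1)/2`
  have hsumw : (∑ i : Fin n, if (i : ℕ) < k then (i : ℕ) else 0) ≤ k * (k - 1) / 2 := by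
    have h1 : (∑ i : Fin n, if (i : ℕ) < k then (i : ℕ) else 0)
        = ∑ i ∈ Finset.range n, (if i < k then i else 0) :=
      Fin.sum_univ_eq_sum_range (fun i => if i < k then i else 0) n
    have h2 : (Finset.range n).filter (· < k) = Finset.range k := by
      ext x
      simp only [Finset.mem_filter, Finset.mem_range]
      omega
    rw [h1, ← Finset.sum_filter, h2, Finset.sum_range_id]
  -- arithmetic
  have harith : k * (k + 1) / 2 = k + k * (k - 1) / 2 := by
    obtain ⟨m, hm⟩ : ∃ m, k = m + 1 := ⟨k - 1, by omega⟩
    subst hm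
    simp only [Nat.add_sub_cancel]
    have h2 : (m + 1) * (m + 1 + 1) = (m + 1) * m + 2 * (m + 1) := by ring
    rw [h2, Nat.add_mul_div_left _ _ (by norm_num : 0 < 2)]
    exact Nat.add_comm _ _
  refine ⟨?_, ?_, ?_⟩
  · -- part (1)
    intro i j
    refine PB_le hqd ?_ (hPw i j)
    split <;> omega
  · -- part (2)
    exact PB_le hqd hsumw (PB_det hPw)
  · -- part (3)
    intro i j
    have hB : ∀ i l : Fin n, PB q d k ((P * M + P.map der) i l) := by
      intro i l
      have hrow : (P * M + P.map der) i l = cvDelta der M (P i) l := by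
        simp [cvDelta, Matrix.mul_apply, Matrix.map_apply, Matrix.vecMul, dotProduct]
      rw [hrow]
      refine PB_le hqd ?_ (hdelta _ (P i) (hPw i) l)
      split <;> omega
    have hadj : ∀ l j : Fin n, PB q d (k * (k - 1) / 2) (P.adjugate l j) := by
      intro l j
      rw [Matrix.adjugate_apply]
      have hupd : ∀ i' j' : Fin n,
          PB q d (if i' = j then 0 else if (i' : ℕ) < k then (i' : ℕ) else 0)
            ((P.updateRow j (Pi.single l 1)) i' j') := by
        intro i' j'
        rcases eq_or_ne i' j with rfl | hne
        · rw [if_pos rfl, Matrix.updateRow_self]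
          exact hsingle l j'
        · rw [if_neg hne, Matrix.updateRow_ne hne]
          exact hPw i' j'
      refine PB_le hqd ?_ (PB_det hupd)
      refine le_trans (Finset.sum_le_sum fun i' _ => ?_) hsumw
      split <;> split <;> omega
    have hdetne : P.det ≠ 0 := hP.ne_zero
    have hkey : P.det * (((P * M + P.map der) * P⁻¹) i j)
        = ((P * M + P.map der) * P.adjugate) i j := by
      rw [Matrix.mul_apply, Matrix.mul_apply, Finset.mul_sum]
      refine Finset.sum_congr rfl fun l _ => ?_
      have hinv : P⁻¹ l j = Ring.inverse P.det * P.adjugate l j := by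
        rw [Matrix.inv_def]; rfl
      calc P.det * ((P * M + P.map der) i l * P⁻¹ l j)
          = (P.det * Ring.inverse P.det) * ((P * M + P.map der) i l * P.adjugate l j) := by
            rw [hinv]; ring
        _ = (P * M + P.map der) i l * P.adjugate l j := by
            rw [Ring.mul_inverse_cancel _ hP, one_mul]
    have hprod : PB q d (k * (k + 1) / 2) (((P * M + P.map der) * P.adjugate) i j) := by
      rw [harith, Matrix.mul_apply]
      exact PB_sum fun l _ => PB_mul (hB i l) (hadj l j)
    obtain ⟨p, hp1, hp2⟩ := hprod
    refine ⟨p, hp1, ?_⟩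
    rw [mul_assoc, hkey]
    exact hp2
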